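/- Let N ≥ 1 and a_0,…,a_{N−1} ∈ ℝ. Let V ⊆ (ℕ → ℝ) be the set of sequences b such that for all k ∈ ℕ: ((k+N)!/k!) · b_{k+N} + Σ_{j=0}^{N−1} a_j · ((k+j)!/k!) · b_{k+j} = 0 (the formal power series solutions of y^{(N)} + a_{N−1} y^{(N−1)} + … + a_1 y' + a_0 y = 0), and let W ⊆ (ℕ → ℝ) be the set of sequences z such that for all n ∈ ℕ: (Δ^N z)(n) + Σ_{j=0}^{N−1} a_j · (Δ^j z)(n) = 0. Then the ℝ-linear map Φ defined by Φ(b)(n) = Σ_{k=0}^{n} b_k · n!/(n−k)! restricts to a bijection from V onto W. -/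

import Mathlib

/-- The forward difference operator acting on sequences. -/
def fwdDiffSeq (u : ℕ → ℝ) : ℕ → ℝ := fun n => u (n + 1) - u n

namespace FSB

noncomputable def Phi (b : ℕ → ℝ) : ℕ → ℝ :=
  fun n => ∑ k ∈ Finset.range (n + 1), b k * (Nat.descFactorial n k : ℝ)

def Dop (b : ℕ → ℝ) : ℕ → ℝ := fun k => ((k : ℝ) + 1) * b (k + 1)

lemma fwdDiff_Phi (b : ℕ → ℝ) : fwdDiffSeq (Phi b) = Phi (Dop b) := by
  funext n
  simp only [fwdDiffSeq, Phi, Dop]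
  rw [Finset.sum_range_succ' (fun k => b k * (Nat.descFactorial (n+1) k : ℝ)),
      Finset.sum_range_succ' (fun k => b k * (Nat.descFactorial n k : ℝ))]
  have h0 : (Nat.descFactorial n (n+1) : ℝ) = 0 := by
    simp [Nat.descFactorial_eq_zero_iff_lt]
  have h1 : ∑ k ∈ Finset.range n, b (k+1) * (Nat.descFactorial n (k+1) : ℝ)
      = ∑ k ∈ Finset.range (n+1), b (k+1) * (Nat.descFactorial n (k+1) : ℝ) := by
    rw [Finset.sum_range_succ, h0]; ring
  rw [h1]
  simp only [Nat.descFactorial_zero, Nat.cast_one]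
  rw [add_sub_add_right_eq_sub, ← Finset.sum_sub_distrib]
  apply Finset.sum_congr rfl
  intro k hk
  have hk' : k ≤ n := Nat.lt_succ_iff.mp (Finset.mem_range.mp hk)
  have e1 : (Nat.descFactorial (n+1) (k+1) : ℝ) = (n+1) * Nat.descFactorial n k := by
    rw [Nat.succ_descFactorial_succ]; push_cast; ring
  have e2 : (Nat.descFactorial n (k+1) : ℝ) = ((n : ℝ) - k) * Nat.descFactorial n k := by
    rw [Nat.descFactorial_succ]
    push_cast [Nat.cast_sub hk']
    ring
  rw [e1, e2]
  ring

lemma iter_fwdDiff_Phi (j : ℕ) (b : ℕ → ℝ) :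
    fwdDiffSeq^[j] (Phi b) = Phi (Dop^[j] b) := by
  induction j generalizing b with
  | zero => rfl
  | succ j ih =>
      rw [Function.iterate_succ_apply, Function.iterate_succ_apply, fwdDiff_Phi, ih]

lemma Dop_iterate (j : ℕ) (b : ℕ → ℝ) (k : ℕ) :
    Dop^[j] b k = (Nat.descFactorial (k + j) j : ℝ) * b (k + j) := by
  induction j generalizing b with
  | zero => simp
  | succ j ih =>
      rw [Function.iterate_succ_apply, ih]
      simp only [Dop]
      have : k + (j + 1) = (k + j) + 1 := by ring
      rw [this, Nat.succ_descFactorial_succ]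
      push_cast
      ring

lemma Phi_inj : Function.Injective Phi := by
  intro b c h
  funext n
  induction n using Nat.strong_induction_on with
  | _ n ih =>
    have hn := congrFun h n
    simp only [Phi, Finset.sum_range_succ] at hn
    have hs : ∑ k ∈ Finset.range n, b k * (Nat.descFactorial n k : ℝ)
        = ∑ k ∈ Finset.range n, c k * (Nat.descFactorial n k : ℝ) := by
      apply Finset.sum_congr rfl
      intro k hk
      rw [ih k (Finset.mem_range.mp hk)]
    rw [hs] at hn
    have hfac : (Nat.descFactorial n n : ℝ) ≠ 0 := by
      simp [Nat.descFactorial_self]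
      exact_mod_cast Nat.factorial_ne_zero n
    have := add_left_cancel hn
    exact mul_right_cancel₀ hfac this

noncomputable def invPhi (z : ℕ → ℝ) : ℕ → ℝ
  | n => (z n - ∑ k ∈ (Finset.range n).attach,
      invPhi z k.1 * (Nat.descFactorial n k.1 : ℝ)) / (Nat.factorial n : ℝ)
  decreasing_by exact Finset.mem_range.mp k.2

lemma Phi_invPhi (z : ℕ → ℝ) : Phi (invPhi z) = z := by
  funext n
  simp only [Phi, Finset.sum_range_succ]
  rw [invPhi]
  rw [Finset.sum_attach (Finset.range n) (fun k => invPhi z k * (Nat.descFactorial n k : ℝ))]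
  have hfac : (Nat.factorial n : ℝ) ≠ 0 := by
    exact_mod_cast Nat.factorial_ne_zero n
  rw [Nat.descFactorial_self]
  field_simp
  ring

lemma Phi_lin (N : ℕ) (a : ℕ → ℝ) (b : ℕ → ℝ) (n : ℕ) :
    fwdDiffSeq^[N] (Phi b) n + ∑ j ∈ Finset.range N, a j * fwdDiffSeq^[j] (Phi b) n
    = Phi (fun k => (Nat.descFactorial (k + N) N : ℝ) * b (k + N)
        + ∑ j ∈ Finset.range N, a j * (Nat.descFactorial (k + j) j : ℝ) * b (k + j)) n := by
  simp only [iter_fwdDiff_Phi, Phi, Dop_iterate]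
  rw [Finset.sum_congr rfl (fun k _ => add_mul _ _ _), Finset.sum_add_distrib]
  congr 1
  calc ∑ j ∈ Finset.range N, a j * ∑ k ∈ Finset.range (n+1),
          (Nat.descFactorial (k + j) j : ℝ) * b (k + j) * (Nat.descFactorial n k : ℝ)
      = ∑ j ∈ Finset.range N, ∑ k ∈ Finset.range (n+1),
          a j * (Nat.descFactorial (k + j) j : ℝ) * b (k + j) * (Nat.descFactorial n k : ℝ) := by
        refine Finset.sum_congr rfl fun j _ => ?_
        rw [Finset.mul_sum]
        exact Finset.sum_congr rfl fun k _ => by ring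
    _ = ∑ k ∈ Finset.range (n+1), ∑ j ∈ Finset.range N,
          a j * (Nat.descFactorial (k + j) j : ℝ) * b (k + j) * (Nat.descFactorial n k : ℝ) :=
        Finset.sum_comm
    _ = ∑ k ∈ Finset.range (n+1),
          (∑ j ∈ Finset.range N, a j * (Nat.descFactorial (k + j) j : ℝ) * b (k + j))
            * (Nat.descFactorial n k : ℝ) := by
        refine Finset.sum_congr rfl fun k _ => ?_
        rw [Finset.sum_mul]

end FSB

theorem fundamental_system_bijection (N : ℕ) (hN : 1 ≤ N) (a : ℕ → ℝ) :
    Set.BijOn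
      (fun (b : ℕ → ℝ) (n : ℕ) =>
        ∑ k ∈ Finset.range (n + 1), b k * (Nat.descFactorial n k : ℝ))
      {b : ℕ → ℝ | ∀ k : ℕ,
        (Nat.descFactorial (k + N) N : ℝ) * b (k + N)
          + ∑ j ∈ Finset.range N, a j * (Nat.descFactorial (k + j) j : ℝ) * b (k + j) = 0}
      {z : ℕ → ℝ | ∀ n : ℕ,
        (fwdDiffSeq^[N] z) n + ∑ j ∈ Finset.range N, a j * (fwdDiffSeq^[j] z) n = 0} := by
  have hPhi : (fun (b : ℕ → ℝ) (n : ℕ) =>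
      ∑ k ∈ Finset.range (n + 1), b k * (Nat.descFactorial n k : ℝ)) = FSB.Phi := rfl
  rw [hPhi]
  refine ⟨?_, ?_, ?_⟩
  · intro b hb n
    rw [FSB.Phi_lin N a b n]
    have : (fun k => (Nat.descFactorial (k + N) N : ℝ) * b (k + N)
        + ∑ j ∈ Finset.range N, a j * (Nat.descFactorial (k + j) j : ℝ) * b (k + j))
        = (fun _ => (0:ℝ)) := funext hb
    rw [this]
    simp [FSB.Phi]
  · intro b _ c _ h
    exact FSB.Phi_inj h
  · intro z hz
    refine ⟨FSB.invPhi z, ?_, FSB.Phi_invPhi z⟩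
    intro k
    have h0 : FSB.Phi (fun k => (Nat.descFactorial (k + N) N : ℝ) * FSB.invPhi z (k + N)
        + ∑ j ∈ Finset.range N, a j * (Nat.descFactorial (k + j) j : ℝ) * FSB.invPhi z (k + j))
        = FSB.Phi (fun _ => 0) := by
      funext n
      rw [← FSB.Phi_lin N a (FSB.invPhi z) n]
      have hz' := hz n
      simp only [FSB.Phi_invPhi] at *
      rw [hz']
      simp [FSB.Phi]
    have := congrFun (FSB.Phi_inj h0) k
    simpa using this
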